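/- Let a, b, k be integers with b ≥ 1, a ≥ 2b, and a ≤ k·b, and let ρ be a real number with ρ ≥ e and k ≤ ρ/ln ρ. Then ln C(a,b) + ρ · ln( C(a−b,b) / C(a,b) ) ≤ b·(1 − ln ln ρ), where C(x,y) denotes the binomial coefficient. -/

import Mathlib

open Real Finset

-- Step 2 nat lemma
lemma desc_ineq (a b : ℕ) (ha : 2 * b ≤ a) :
    (a - b).descFactorial b * a ^ b ≤ a.descFactorial b * (a - b) ^ b := by
  have e1 : a ^ b = ∏ _i ∈ range b, a := by simp
  have e2 : (a - b) ^ b = ∏ _i ∈ range b, (a - b) := by simp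
  rw [Nat.descFactorial_eq_prod_range, Nat.descFactorial_eq_prod_range, e1, e2,
    ← Finset.prod_mul_distrib, ← Finset.prod_mul_distrib]
  apply Finset.prod_le_prod'
  intro i hi
  simp only [Finset.mem_range] at hi
  have h1 : a - b - i = a - i - b := by omega
  rw [h1, Nat.sub_mul, Nat.mul_sub]
  have h2 : (a - i) * b ≤ b * a := by
    exact (Nat.mul_le_mul_right b (Nat.sub_le a i)).trans_eq (Nat.mul_comm a b)
  omega

/-- Let `a`, `b`, `k` be integers with `b ≥ 1`, `a ≥ 2b`, and `a ≤ k·b`, and let `ρ`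
be a real number with `ρ ≥ e` and `k ≤ ρ/ln ρ`. Then
`ln C(a,b) + ρ·ln(C(a-b,b)/C(a,b)) ≤ b·(1 − ln ln ρ)`. -/
theorem statement_8 (a b k : ℕ) (hb : 1 ≤ b) (ha : 2 * b ≤ a) (hak : a ≤ k * b)
    (ρ : ℝ) (hρ : Real.exp 1 ≤ ρ) (hk : (k : ℝ) ≤ ρ / Real.log ρ) :
    Real.log (a.choose b : ℝ) +
        ρ * Real.log (((a - b).choose b : ℝ) / (a.choose b : ℝ)) ≤
      (b : ℝ) * (1 - Real.log (Real.log ρ)) := by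
  have hbR : (1:ℝ) ≤ (b:ℝ) := by exact_mod_cast hb
  have hb0 : (0:ℝ) < (b:ℝ) := by linarith
  have haR : 2 * (b:ℝ) ≤ (a:ℝ) := by exact_mod_cast ha
  have ha0 : (0:ℝ) < (a:ℝ) := by linarith
  have hk2 : 2 ≤ k := by rcases k with _|_|k <;> omega
  have hkR : (2:ℝ) ≤ (k:ℝ) := by exact_mod_cast hk2
  have hakR : (a:ℝ) ≤ (k:ℝ) * (b:ℝ) := by exact_mod_cast hak
  have hρ0 : (0:ℝ) < ρ := lt_of_lt_of_le (Real.exp_pos 1) hρ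
  have hlρ : (1:ℝ) ≤ Real.log ρ := by
    rw [← Real.log_exp 1]; exact Real.log_le_log (Real.exp_pos 1) hρ
  have hlρ0 : (0:ℝ) < Real.log ρ := by linarith
  -- k log ρ ≤ ρ
  have hkρ : (k:ℝ) * Real.log ρ ≤ ρ := by
    rw [div_eq_mul_inv] at hk
    calc (k:ℝ) * Real.log ρ ≤ ρ * (Real.log ρ)⁻¹ * Real.log ρ := by
          apply mul_le_mul_of_nonneg_right hk hlρ0.le
      _ = ρ := by field_simp
  -- choose positivity
  have hcb : b ≤ a := by omega
  have hcb2 : b ≤ a - b := by omega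
  have hC0 : (0:ℝ) < (a.choose b : ℝ) := by
    exact_mod_cast Nat.choose_pos hcb
  have hC0' : (0:ℝ) < ((a-b).choose b : ℝ) := by
    exact_mod_cast Nat.choose_pos hcb2
  -- Step 1 : log C(a,b) ≤ b * (1 + log k)
  have hstep1 : Real.log (a.choose b : ℝ) ≤ (b:ℝ) * (1 + Real.log k) := by
    have h1 : (a.choose b : ℝ) ≤ ((a:ℝ)^b) / (b.factorial : ℝ) := by
      exact_mod_cast Nat.choose_le_pow_div b a
    have h2 : ((b:ℝ))^b / (b.factorial : ℝ) ≤ Real.exp b :=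
      Real.pow_div_factorial_le_exp (x := (b:ℝ)) (by positivity) b
    have hf0 : (0:ℝ) < (b.factorial : ℝ) := by exact_mod_cast b.factorial_pos
    have h3 : (a.choose b : ℝ) ≤ (Real.exp 1 * (k:ℝ))^b := by
      have hba : (a:ℝ)^b ≤ ((k:ℝ)*(b:ℝ))^b := by
        apply pow_le_pow_left₀ ha0.le hakR
      have h4 : ((b:ℝ))^b ≤ Real.exp b * (b.factorial : ℝ) := by
        rw [div_le_iff₀ hf0] at h2; exact h2
      calc (a.choose b : ℝ) ≤ ((a:ℝ)^b) / (b.factorial : ℝ) := h1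
        _ ≤ ((k:ℝ)*(b:ℝ))^b / (b.factorial : ℝ) := by gcongr
        _ = (k:ℝ)^b * ((b:ℝ)^b / (b.factorial : ℝ)) := by
            rw [mul_pow]; ring
        _ ≤ (k:ℝ)^b * Real.exp b := by
            apply mul_le_mul_of_nonneg_left h2 (by positivity)
        _ = (Real.exp 1 * (k:ℝ))^b := by
            rw [mul_pow, Real.exp_one_pow]; ring
    calc Real.log (a.choose b : ℝ) ≤ Real.log ((Real.exp 1 * (k:ℝ))^b) :=
          Real.log_le_log hC0 h3
      _ = (b:ℝ) * (1 + Real.log k) := by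
          rw [Real.log_pow, Real.log_mul (Real.exp_ne_zero 1) (by positivity),
            Real.log_exp]
  -- Step 2 : ratio bound
  have hab0 : (0:ℝ) < (a:ℝ) - (b:ℝ) := by linarith
  have hdn := desc_ineq a b ha
  rw [Nat.descFactorial_eq_factorial_mul_choose, Nat.descFactorial_eq_factorial_mul_choose,
    mul_assoc, mul_assoc] at hdn
  have hdn2 : (a-b).choose b * a ^ b ≤ a.choose b * (a - b) ^ b :=
    Nat.le_of_mul_le_mul_left hdn b.factorial_pos
  have hdR : ((a-b).choose b : ℝ) * (a:ℝ)^b ≤ (a.choose b : ℝ) * ((a:ℝ)-(b:ℝ))^b := by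
    have := Nat.cast_le (α := ℝ) |>.mpr hdn2
    push_cast [Nat.cast_sub hcb] at this
    convert this using 2
  have hratio : ((a-b).choose b : ℝ)/(a.choose b : ℝ) ≤ (((a:ℝ)-(b:ℝ))/(a:ℝ))^b := by
    rw [div_pow, div_le_div_iff₀ hC0 (by positivity)]
    linarith [hdR]
  have hlogt : Real.log (((a:ℝ)-(b:ℝ))/(a:ℝ)) ≤ -(1/(k:ℝ)) := by
    have h1 : Real.log (((a:ℝ)-(b:ℝ))/(a:ℝ)) ≤ ((a:ℝ)-(b:ℝ))/(a:ℝ) - 1 :=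
      Real.log_le_sub_one_of_pos (by positivity)
    have h2 : ((a:ℝ)-(b:ℝ))/(a:ℝ) - 1 = -((b:ℝ)/(a:ℝ)) := by field_simp; ring
    have h3 : 1/(k:ℝ) ≤ (b:ℝ)/(a:ℝ) := by
      rw [div_le_div_iff₀ (by linarith) ha0]
      linarith
    linarith
  have hstep2 : Real.log (((a-b).choose b : ℝ)/(a.choose b : ℝ)) ≤ (b:ℝ) * (-(1/(k:ℝ))) := by
    calc Real.log (((a-b).choose b : ℝ)/(a.choose b : ℝ))
        ≤ Real.log ((((a:ℝ)-(b:ℝ))/(a:ℝ))^b) := Real.log_le_log (by positivity) hratio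
      _ = (b:ℝ) * Real.log (((a:ℝ)-(b:ℝ))/(a:ℝ)) := by rw [Real.log_pow]
      _ ≤ (b:ℝ) * (-(1/(k:ℝ))) := by
          apply mul_le_mul_of_nonneg_left hlogt hb0.le
  -- combine
  have hq : Real.log ρ ≤ ρ / (k:ℝ) := by
    rw [le_div_iff₀ (by linarith : (0:ℝ) < (k:ℝ))]
    linarith [hkρ]
  have h5 : ρ * Real.log (((a-b).choose b : ℝ)/(a.choose b : ℝ)) ≤ ρ * ((b:ℝ) * (-(1/(k:ℝ)))) :=
    mul_le_mul_of_nonneg_left hstep2 hρ0.le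
  have h6 : ρ * ((b:ℝ) * (-(1/(k:ℝ)))) = -(ρ/(k:ℝ) * (b:ℝ)) := by ring
  have h7 : Real.log ρ * (b:ℝ) ≤ ρ/(k:ℝ) * (b:ℝ) :=
    mul_le_mul_of_nonneg_right hq hb0.le
  have h8 : Real.log (k:ℝ) ≤ Real.log ρ - Real.log (Real.log ρ) := by
    rw [← Real.log_div hρ0.ne' hlρ0.ne']
    exact Real.log_le_log (by linarith) hk
  have h9 : (b:ℝ)*(1+Real.log (k:ℝ)) ≤ (b:ℝ)*(1 + Real.log ρ - Real.log (Real.log ρ)) :=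
    mul_le_mul_of_nonneg_left (by linarith) hb0.le
  nlinarith [hstep1, h5, h6, h7, h9]
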